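/- For all reals ρ_r, ρ_w ≥ 0 and every ξ ∈ (0, 1/2) with ρ_r + ρ_w + ξ < 1, there exists N₀ such that for every N ≥ N₀ with ρ_r·N and ρ_w·N integers, there exist a prime q, an integer u with u ≤ 169/ξ² and q > N·u, an alphabet Σ = F_q^u (viewed as a finite abelian group), a finite message set 𝓜 with log|𝓜| ≥ (1 − ρ_r − ρ_w − ξ)·N·log|Σ|, and a code (Enc, Dec) of length N over Σ that is a (0,δ)-AWTP code for the (ρ_r,ρ_w)-AWTP channel (perfect secrecy) with decoding error probability δ ≤ ξ. Consequently, the rate 1 − ρ_r − ρ_w is achievable with perfect secrecy for the (ρ_r,ρ_w)-AWTP channel (with alphabet allowed to grow with N). -/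

import Mathlib

open Finset

noncomputable section

open scoped Classical

namespace AWTP

/-- Statistical distance between two (finitely supported) distributions. -/
def sd {α : Type} [Fintype α] (p q : α → ℝ) : ℝ := (∑ x, |p x - q x|) / 2

/-- A code of length `N` over alphabet `Alph`: a finite message set, a finite
seed set, a (randomized) encoder and a deterministic decoder. -/
structure Code (Alph : Type) (N : ℕ) where
  Mt : Type
  Rt : Type
  [fM : Fintype Mt]
  [fR : Fintype Rt]
  enc : Mt → Rt → Fin N → Alph
  dec : (Fin N → Alph) → Mt

attribute [instance] Code.fM Code.fR

/-- Distribution of the restriction to `S` of the encoding of a fixed message,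
the seed being uniform. -/
def viewDist {R Alph : Type} [Fintype R] {N : ℕ} (enc : R → Fin N → Alph)
    (S : Finset (Fin N)) (v : {i // i ∈ S} → Alph) : ℝ :=
  ((Finset.univ.filter (fun r : R => ∀ i : {i // i ∈ S}, enc r i.val = v i)).card : ℝ)
    / (Fintype.card R : ℝ)

/-- `ε`-secrecy for reading ratio `ρr`. -/
def Code.Secrecy {Alph : Type} {N : ℕ} [iS : Fintype Alph] (C : Code Alph N)
    (ε ρr : ℝ) : Prop :=
  ∀ S : Finset (Fin N), (S.card : ℝ) ≤ ρr * N →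
    ∀ m₀ m₁ : C.Mt, sd (viewDist (C.enc m₀) S) (viewDist (C.enc m₁) S) ≤ ε

/-- `δ`-reliability against all `(ρr,ρw)`-adversaries. -/
def Code.Reliability {Alph : Type} {N : ℕ} [iS : Fintype Alph] [gS : AddCommGroup Alph]
    (C : Code Alph N) (δ ρr ρw : ℝ) : Prop :=
  ∀ (PM : C.Mt → ℝ), (∀ m, 0 ≤ PM m) → ∑ m, PM m = 1 →
  ∀ (Sr Sw : Finset (Fin N)), (Sr.card : ℝ) ≤ ρr * N → (Sw.card : ℝ) ≤ ρw * N →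
  ∀ (T : Type) [Fintype T], ∀ (PT : T → ℝ), (∀ t, 0 ≤ PT t) → ∑ t, PT t = 1 →
  ∀ (g : ({i // i ∈ Sr} → Alph) → T → Fin N → Alph),
    (∀ x t i, i ∉ Sw → g x t i = 0) →
    (∑ m, ∑ r, ∑ t, PM m * PT t / (Fintype.card C.Rt : ℝ) *
      (if C.dec (fun i => C.enc m r i + g (fun j => C.enc m r j.val) t i) = m
        then 0 else 1)) ≤ δ

/-- Rate of a code: `log|𝓜| / (N log|Σ|)` (logs base 2). -/
def Code.rate {Alph : Type} {N : ℕ} [iS : Fintype Alph] (C : Code Alph N) : ℝ :=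
  Real.logb 2 (Fintype.card C.Mt) / (N * Real.logb 2 (Fintype.card Alph))


/-- There is a code over the alphabet `F_q^u` of length `N` with perfect
secrecy, reliability `ξ`, and rate at least `1 - ρr - ρw - ξ`. -/
def GoodCode (ρr ρw ξ : ℝ) (N q u : ℕ) [NeZero q] : Prop :=
  ∃ C : Code (Fin u → ZMod q) N,
    2 ≤ Fintype.card C.Mt ∧
    (1 - ρr - ρw - ξ) * N * Real.logb 2 (Fintype.card (Fin u → ZMod q)) ≤
      Real.logb 2 (Fintype.card C.Mt) ∧
    C.Secrecy 0 ρr ∧ C.Reliability ξ ρr ρw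

namespace Constr

open Polynomial

lemma viewDist_congr {R Alph : Type} [Fintype R] {N : ℕ} (enc₀ enc₁ : R → Fin N → Alph)
    (S : Finset (Fin N)) (σ : R ≃ R)
    (h : ∀ r (i : Fin N), i ∈ S → enc₀ (σ r) i = enc₁ r i) :
    viewDist enc₀ S = viewDist enc₁ S := by
  funext v
  unfold viewDist
  congr 1
  rw [Nat.cast_inj]
  apply Finset.card_bij' (i := fun r _ => σ.symm r) (j := fun r _ => σ r)
  case hi =>
    intro r hr
    simp only [Finset.mem_filter, Finset.mem_univ, true_and] at hr ⊢
    intro i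
    rw [← h (σ.symm r) i.val i.property, Equiv.apply_symm_apply]
    exact hr i
  case hj =>
    intro r hr
    simp only [Finset.mem_filter, Finset.mem_univ, true_and] at hr ⊢
    intro i
    rw [h r i.val i.property]
    exact hr i
  case left_inv => intro r _; simp
  case right_inv => intro r _; simp

/-! Evaluation points: `1, 2, ..., N` in `ZMod q`. -/

def pts (q N : ℕ) (i : Fin N) : ZMod q := (((i : ℕ) + 1 : ℕ) : ZMod q)

lemma pts_inj {q N : ℕ} (hNq : N < q) : Function.Injective (pts q N) := by
  intro i j h
  have hi : (((i : ℕ) + 1 : ℕ) : ZMod q).val = (i : ℕ) + 1 :=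
    ZMod.val_cast_of_lt (by have := i.isLt; omega)
  have hj : (((j : ℕ) + 1 : ℕ) : ZMod q).val = (j : ℕ) + 1 :=
    ZMod.val_cast_of_lt (by have := j.isLt; omega)
  have h2 := congrArg ZMod.val h
  rw [pts, pts, hi, hj] at h2
  exact Fin.ext (by omega)

lemma pts_ne_zero {q N : ℕ} (hNq : N < q) (i : Fin N) : pts q N i ≠ 0 := by
  intro h
  have h1 := (ZMod.natCast_eq_zero_iff _ _).mp h
  have h2 := Nat.le_of_dvd (by omega) h1
  have := i.isLt
  omega

/-! The MAC. -/

def mac (q k : ℕ) (key : ZMod q) (m : Fin k → ZMod q) : ZMod q :=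
  (∑ i : Fin k, m i * key ^ ((i : ℕ) + 1)) + key ^ (k + 2)

/-! Coefficient vector and generic codeword polynomial. -/

def co (q k a : ℕ) (pm : Fin k → ZMod q) (pms : Fin a → ZMod q) (pk pt : ZMod q) (n : ℕ) :
    ZMod q :=
  if h : n < k then pm ⟨n, h⟩
  else if h2 : n < k + a then pms ⟨n - k, by omega⟩
  else if n = k + a then pk else pt

def Pg (q k a : ℕ) (pm : Fin k → ZMod q) (pms : Fin a → ZMod q) (pk pt : ZMod q) :
    Polynomial (ZMod q) :=
  ∑ n ∈ Finset.range (k + a + 2), Polynomial.C (co q k a pm pms pk pt n) * Polynomial.X ^ n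

lemma coeff_Pg (q k a : ℕ) (pm : Fin k → ZMod q) (pms : Fin a → ZMod q) (pk pt : ZMod q)
    (n : ℕ) :
    (Pg q k a pm pms pk pt).coeff n
      = if n ∈ Finset.range (k + a + 2) then co q k a pm pms pk pt n else 0 := by
  rw [Pg, Polynomial.finset_sum_coeff]
  simp only [Polynomial.coeff_C_mul, Polynomial.coeff_X_pow, mul_ite, mul_one, mul_zero]
  rw [Finset.sum_congr rfl (fun j _ => by rw [show (if n = j then co q k a pm pms pk pt j else 0)
      = if j = n then co q k a pm pms pk pt j else 0 by simp [eq_comm]]),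
    Finset.sum_ite_eq' (Finset.range (k + a + 2)) n]

lemma co_msg (q k a : ℕ) (pm : Fin k → ZMod q) (pms : Fin a → ZMod q) (pk pt : ZMod q)
    (i : Fin k) : co q k a pm pms pk pt (i : ℕ) = pm i := by
  rw [co, dif_pos i.isLt]

lemma co_mask (q k a : ℕ) (pm : Fin k → ZMod q) (pms : Fin a → ZMod q) (pk pt : ZMod q)
    (j : Fin a) : co q k a pm pms pk pt (k + (j : ℕ)) = pms j := by
  have hj := j.isLt
  rw [co, dif_neg (by omega), dif_pos (by omega)]
  congr 1
  apply Fin.ext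
  simp

lemma co_key (q k a : ℕ) (pm : Fin k → ZMod q) (pms : Fin a → ZMod q) (pk pt : ZMod q) :
    co q k a pm pms pk pt (k + a) = pk := by
  rw [co, dif_neg (by omega), dif_neg (by omega), if_pos rfl]

lemma co_tag (q k a : ℕ) (pm : Fin k → ZMod q) (pms : Fin a → ZMod q) (pk pt : ZMod q) :
    co q k a pm pms pk pt (k + a + 1) = pt := by
  rw [co, dif_neg (by omega), dif_neg (by omega), if_neg (by omega)]

lemma co_add (q k a : ℕ) (pm pm' : Fin k → ZMod q) (pms pms' : Fin a → ZMod q)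
    (pk pk' pt pt' : ZMod q) (n : ℕ) :
    co q k a (pm + pm') (pms + pms') (pk + pk') (pt + pt') n
      = co q k a pm pms pk pt n + co q k a pm' pms' pk' pt' n := by
  unfold co
  split_ifs <;> simp

lemma Pg_add (q k a : ℕ) (pm pm' : Fin k → ZMod q) (pms pms' : Fin a → ZMod q)
    (pk pk' pt pt' : ZMod q) :
    Pg q k a (pm + pm') (pms + pms') (pk + pk') (pt + pt')
      = Pg q k a pm pms pk pt + Pg q k a pm' pms' pk' pt' := by
  rw [Pg, Pg, Pg, ← Finset.sum_add_distrib]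
  exact Finset.sum_congr rfl fun n _ => by rw [co_add, Polynomial.C_add, add_mul]

lemma Pg_sub (q k a : ℕ) (pm pm' : Fin k → ZMod q) (pms pms' : Fin a → ZMod q)
    (pk pk' pt pt' : ZMod q) :
    Pg q k a (pm - pm') (pms - pms') (pk - pk') (pt - pt')
      = Pg q k a pm pms pk pt - Pg q k a pm' pms' pk' pt' := by
  have h := Pg_add q k a (pm - pm') pm' (pms - pms') pms' (pk - pk') pk' (pt - pt') pt'
  simp only [sub_add_cancel] at h
  rw [h]
  ring

lemma natDegree_Pg_le (q k a : ℕ) [Fact (Nat.Prime q)] (pm : Fin k → ZMod q)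
    (pms : Fin a → ZMod q) (pk pt : ZMod q) :
    (Pg q k a pm pms pk pt).natDegree ≤ k + a + 1 := by
  apply Polynomial.natDegree_sum_le_of_forall_le
  intro n hn
  refine le_trans (Polynomial.natDegree_C_mul_le _ _) ?_
  rw [Polynomial.natDegree_X_pow]
  exact Nat.lt_succ_iff.mp (Finset.mem_range.mp hn)

lemma eq_zero_of_vanish (q k a N : ℕ) [Fact (Nat.Prime q)] (hNq : N < q)
    (T : Finset (Fin N)) (hT : k + a + 2 ≤ T.card) (p : Polynomial (ZMod q))
    (hdeg : p.natDegree ≤ k + a + 1) (hz : ∀ i ∈ T, p.eval (pts q N i) = 0) : p = 0 := by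
  by_contra hp
  have h1 : T.image (pts q N) ⊆ p.roots.toFinset := by
    intro x hx
    rcases Finset.mem_image.mp hx with ⟨i, hi, rfl⟩
    simp only [Multiset.mem_toFinset, Polynomial.mem_roots, hp, Polynomial.IsRoot,
      ne_eq, not_false_eq_true, true_and]
    exact hz i hi
  have h2 : (T.image (pts q N)).card = T.card :=
    Finset.card_image_of_injective _ (pts_inj hNq)
  have h3 := Finset.card_le_card h1
  have h4 := Multiset.toFinset_card_le p.roots
  have h5 := Polynomial.card_roots' p
  omega

/-! Mask-part evaluation. -/

def phi (q k a : ℕ) (d : Fin a → ZMod q) (x : ZMod q) : ZMod q :=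
  ∑ j : Fin a, d j * x ^ (k + (j : ℕ))

lemma eval_Pg_mask (q k a : ℕ) (d : Fin a → ZMod q) (x : ZMod q) :
    (Pg q k a 0 d 0 0).eval x = phi q k a d x := by
  rw [Pg, Polynomial.eval_finset_sum]
  simp only [Polynomial.eval_mul, Polynomial.eval_C, Polynomial.eval_pow, Polynomial.eval_X]
  have hsub : Finset.Ico k (k + a) ⊆ Finset.range (k + a + 2) := by
    intro n hn
    simp only [Finset.mem_Ico] at hn
    simp only [Finset.mem_range]
    omega
  have h0 : ∀ n ∈ Finset.range (k + a + 2), n ∉ Finset.Ico k (k + a) →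
      co q k a (0 : Fin k → ZMod q) d 0 0 n * x ^ n = 0 := by
    intro n _ hn
    simp only [Finset.mem_Ico, not_and, not_lt] at hn
    unfold co
    split_ifs with h1 h2 h3 <;> simp_all <;> omega
  rw [← Finset.sum_subset hsub h0, phi]
  apply Finset.sum_bij' (i := fun (n : ℕ) (hn : n ∈ Finset.Ico k (k + a)) =>
      (⟨n - k, by simp only [Finset.mem_Ico] at hn; omega⟩ : Fin a))
    (j := fun (j : Fin a) _ => k + (j : ℕ))
  case hi => intro n hn; exact Finset.mem_univ _
  case hj =>
    intro j _
    simp only [Finset.mem_Ico]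
    have := j.isLt
    omega
  case left_neg =>
    intro n hn
    simp only [Finset.mem_Ico] at hn
    show k + (n - k) = n
    omega
  case right_neg =>
    intro j _
    simp
  case h =>
    intro n hn
    simp only [Finset.mem_Ico] at hn
    have hco : co q k a (0 : Fin k → ZMod q) d 0 0 n = d ⟨n - k, by omega⟩ := by
      rw [co, dif_neg (by omega), dif_pos (by omega)]
    rw [hco]
    congr 1
    show x ^ n = x ^ (k + (n - k))
    congr 1
    omega


/-! Surjectivity of the mask evaluation (Lagrange interpolation). -/

lemma exists_phi_eq (q k a N : ℕ) [Fact (Nat.Prime q)] (hNq : N < q) (S : Finset (Fin N))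
    (hS : S.card ≤ a) (w : {i // i ∈ S} → ZMod q) :
    ∃ d : Fin a → ZMod q, ∀ i : {i // i ∈ S}, phi q k a d (pts q N i.val) = w i := by
  set r : Fin N → ZMod q :=
    fun i => if h : i ∈ S then w ⟨i, h⟩ * (pts q N i ^ k)⁻¹ else 0 with hr
  set B := Lagrange.interpolate S (pts q N) r with hB
  refine ⟨fun j => B.coeff (j : ℕ), ?_⟩
  intro i
  have hinj : Set.InjOn (pts q N) S := (pts_inj hNq).injOn
  have hSne : 0 < S.card := Finset.card_pos.mpr ⟨i.val, i.property⟩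
  have hBnat : B.natDegree < a := by
    by_cases hB0 : B = 0
    · rw [hB0]
      simp only [Polynomial.natDegree_zero]
      omega
    · rw [Polynomial.natDegree_lt_iff_degree_lt hB0]
      refine lt_of_lt_of_le (Lagrange.degree_interpolate_lt _ hinj) ?_
      exact_mod_cast Nat.cast_le.mpr hS
  have heval : B.eval (pts q N i.val) = r i.val :=
    Lagrange.eval_interpolate_at_node r hinj i.property
  have hphi : phi q k a (fun j => B.coeff (j : ℕ)) (pts q N i.val)
      = pts q N i.val ^ k * B.eval (pts q N i.val) := by
    rw [Polynomial.eval_eq_sum_range' hBnat, Finset.mul_sum, phi,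
      Fin.sum_univ_eq_sum_range (fun j => B.coeff j * pts q N i.val ^ (k + j)) a]
    exact Finset.sum_congr rfl fun j _ => by rw [pow_add]; ring
  rw [hphi, heval, hr]
  simp only [i.property, dif_pos]
  have hx : pts q N i.val ^ k ≠ 0 := pow_ne_zero _ (pts_ne_zero hNq i.val)
  field_simp

/-! The code. -/

def mac' (q k : ℕ) := mac q k

def PgF (q k a : ℕ) (m : Fin k → ZMod q) (mask : Fin a → ZMod q) (key : ZMod q) :
    Polynomial (ZMod q) :=
  Pg q k a m mask key (mac q k key m)

def enc (q k a N : ℕ) (m : Fin k → ZMod q) (r : (Fin a → ZMod q) × ZMod q) :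
    Fin N → (Fin 1 → ZMod q) :=
  fun i _ => (PgF q k a m r.1 r.2).eval (pts q N i)

def Cand (q k a b N : ℕ) (y : Fin N → (Fin 1 → ZMod q)) (m' : Fin k → ZMod q) : Prop :=
  ∃ Sw' : Finset (Fin N), Sw'.card ≤ b ∧ ∃ mask' key',
    ∀ i, i ∉ Sw' → (PgF q k a m' mask' key').eval (pts q N i) = y i 0

def dec (q k a b N : ℕ) (y : Fin N → (Fin 1 → ZMod q)) : Fin k → ZMod q :=
  if h : ∃ m', Cand q k a b N y m' ∧ ∀ m'', Cand q k a b N y m'' → m'' = m' then h.choose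
  else 0

def theCode (q k a b N : ℕ) [NeZero q] : Code (Fin 1 → ZMod q) N where
  Mt := Fin k → ZMod q
  Rt := (Fin a → ZMod q) × ZMod q
  enc := enc q k a N
  dec := dec q k a b N

/-! The bad-key predicate and the forgery polynomial. -/

def BadP (q k a b N : ℕ) (m : Fin k → ZMod q) (e : Fin N → ZMod q) (Sw' : Finset (Fin N))
    (key : ZMod q) : Prop :=
  Sw'.card ≤ b ∧ ∃ pm pms pk pt, pm ≠ 0 ∧
    (∀ i, i ∉ Sw' → (Pg q k a pm pms pk pt).eval (pts q N i) = e i) ∧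
    mac q k (key + pk) (m + pm) = mac q k key m + pt

def Qp (q k : ℕ) (m pm : Fin k → ZMod q) (pk pt : ZMod q) : Polynomial (ZMod q) :=
  (∑ i : Fin k, Polynomial.C ((m + pm) i) * (Polynomial.X + Polynomial.C pk) ^ ((i : ℕ) + 1))
    + (Polynomial.X + Polynomial.C pk) ^ (k + 2)
    - ((∑ i : Fin k, Polynomial.C (m i) * Polynomial.X ^ ((i : ℕ) + 1))
        + Polynomial.X ^ (k + 2))
    - Polynomial.C pt

lemma eval_Qp (q k : ℕ) (m pm : Fin k → ZMod q) (pk pt : ZMod q) (key : ZMod q) :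
    (Qp q k m pm pk pt).eval key = mac q k (key + pk) (m + pm) - mac q k key m - pt := by
  simp only [Qp, mac, Polynomial.eval_sub, Polynomial.eval_add, Polynomial.eval_finset_sum,
    Polynomial.eval_mul, Polynomial.eval_C, Polynomial.eval_pow, Polynomial.eval_X]

lemma coeff_msum_self (q k : ℕ) (c : Fin k → ZMod q) (i₀ : Fin k) :
    (∑ i : Fin k, Polynomial.C (c i) * Polynomial.X ^ ((i : ℕ) + 1)).coeff ((i₀ : ℕ) + 1)
      = c i₀ := by
  rw [Polynomial.finset_sum_coeff, Finset.sum_eq_single i₀]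
  · simp
  · intro i _ hne
    have hv : (i₀ : ℕ) ≠ (i : ℕ) := fun h => hne (Fin.ext h.symm)
    rw [Polynomial.coeff_C_mul, Polynomial.coeff_X_pow, if_neg (by omega), mul_zero]
  · intro h
    exact absurd (Finset.mem_univ _) h

lemma coeff_msum_hi (q k : ℕ) (c : Fin k → ZMod q) (n : ℕ) (hn : k < n) :
    (∑ i : Fin k, Polynomial.C (c i) * Polynomial.X ^ ((i : ℕ) + 1)).coeff n = 0 := by
  rw [Polynomial.finset_sum_coeff]
  apply Finset.sum_eq_zero
  intro i _
  rw [Polynomial.coeff_C_mul, Polynomial.coeff_X_pow,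
    if_neg (by have := i.isLt; omega), mul_zero]

lemma coeff_qsum_hi (q k : ℕ) [Fact (Nat.Prime q)] (c : Fin k → ZMod q) (pk : ZMod q)
    (n : ℕ) (hn : k < n) :
    (∑ i : Fin k, Polynomial.C (c i) * (Polynomial.X + Polynomial.C pk) ^ ((i : ℕ) + 1)).coeff n
      = 0 := by
  rw [Polynomial.finset_sum_coeff]
  apply Finset.sum_eq_zero
  intro i _
  apply Polynomial.coeff_eq_zero_of_natDegree_lt
  refine lt_of_le_of_lt (Polynomial.natDegree_C_mul_le _ _) ?_
  rw [Polynomial.natDegree_pow, Polynomial.natDegree_X_add_C]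
  have := i.isLt
  omega

lemma natDegree_Qp_le (q k : ℕ) [Fact (Nat.Prime q)] (m pm : Fin k → ZMod q)
    (pk pt : ZMod q) : (Qp q k m pm pk pt).natDegree ≤ k + 2 := by
  have hs : ∀ (c : Fin k → ZMod q) (p : Polynomial (ZMod q)), p.natDegree ≤ 1 →
      (∑ i : Fin k, Polynomial.C (c i) * p ^ ((i : ℕ) + 1)).natDegree ≤ k + 2 := by
    intro c p hp
    apply Polynomial.natDegree_sum_le_of_forall_le
    intro i _
    refine le_trans (Polynomial.natDegree_C_mul_le _ _) ?_
    refine le_trans (Polynomial.natDegree_pow_le) ?_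
    have := i.isLt
    nlinarith
  have h1 := hs (m + pm) (Polynomial.X + Polynomial.C pk) (by
    rw [Polynomial.natDegree_X_add_C])
  have h2 := hs m Polynomial.X (Polynomial.natDegree_X_le)
  unfold Qp
  refine le_trans (Polynomial.natDegree_sub_le _ _) (max_le (le_trans
    (Polynomial.natDegree_sub_le _ _) (max_le (le_trans (Polynomial.natDegree_add_le _ _)
      (max_le h1 ?_)) (le_trans (Polynomial.natDegree_add_le _ _) (max_le h2 ?_)))) ?_)
  · rw [Polynomial.natDegree_pow, Polynomial.natDegree_X_add_C]
    omega
  · rw [Polynomial.natDegree_X_pow]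
  · simp

lemma Qp_ne_zero (q k : ℕ) [Fact (Nat.Prime q)] (hq2 : k + 2 < q) (m pm : Fin k → ZMod q)
    (pk pt : ZMod q) (hpm : pm ≠ 0) : Qp q k m pm pk pt ≠ 0 := by
  by_cases hpk : pk = 0
  · subst hpk
    obtain ⟨i₀, hi₀⟩ : ∃ i, pm i ≠ 0 := by
      by_contra hc
      push_neg at hc
      exact hpm (funext hc)
    intro h0
    have hco := congrArg (fun p => Polynomial.coeff p ((i₀ : ℕ) + 1)) h0
    simp only [Polynomial.coeff_zero] at hco
    rw [Qp] at hco
    simp only [Polynomial.C_0, add_zero, Polynomial.coeff_sub, Polynomial.coeff_add] at hco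
    rw [coeff_msum_self, coeff_msum_self, Polynomial.coeff_X_pow,
      if_neg (by have := i₀.isLt; omega), Polynomial.coeff_C,
      if_neg (by omega)] at hco
    simp only [Pi.add_apply] at hco
    apply hi₀
    linear_combination hco
  · intro h0
    have hco := congrArg (fun p => Polynomial.coeff p (k + 1)) h0
    simp only [Polynomial.coeff_zero] at hco
    rw [Qp] at hco
    simp only [Polynomial.coeff_sub, Polynomial.coeff_add] at hco
    rw [coeff_qsum_hi q k _ _ _ (by omega), coeff_msum_hi q k _ _ (by omega),
      Polynomial.coeff_X_add_C_pow, Polynomial.coeff_X_pow, if_neg (by omega),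
      Polynomial.coeff_C, if_neg (by omega)] at hco
    have hch : (k + 2).choose (k + 1) = k + 2 := Nat.choose_succ_self_right (k + 1)
    have hd : k + 2 - (k + 1) = 1 := by omega
    rw [hch, hd, pow_one] at hco
    have hk2 : ((k + 2 : ℕ) : ZMod q) ≠ 0 := by
      rw [Ne, ZMod.natCast_eq_zero_iff]
      intro hdvd
      have := Nat.le_of_dvd (by omega) hdvd
      omega
    exact (mul_ne_zero hpk hk2) (by linear_combination hco)

/-! If decoding fails, some subset gives a bad key. -/

lemma err_implies_bad (q k a b N : ℕ) [NeZero q] (m : Fin k → ZMod q)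
    (r : (Fin a → ZMod q) × ZMod q) (e : Fin N → (Fin 1 → ZMod q)) (Sw : Finset (Fin N))
    (hSw : Sw.card ≤ b) (hsupp : ∀ i, i ∉ Sw → e i = 0)
    (herr : dec q k a b N (fun i => enc q k a N m r i + e i) ≠ m) :
    ∃ Sw' : Finset (Fin N), BadP q k a b N m (fun i => e i 0) Sw' r.2 := by
  set y : Fin N → (Fin 1 → ZMod q) := fun i => enc q k a N m r i + e i with hy
  have hcm : Cand q k a b N y m := by
    refine ⟨Sw, hSw, r.1, r.2, fun i hi => ?_⟩
    have h0 : e i 0 = 0 := by rw [hsupp i hi]; rfl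
    simp only [hy, Pi.add_apply, h0, add_zero]
    rfl
  have hm' : ∃ m', Cand q k a b N y m' ∧ m' ≠ m := by
    by_contra hc
    push_neg at hc
    have hex : ∃ m', Cand q k a b N y m' ∧ ∀ m'', Cand q k a b N y m'' → m'' = m' :=
      ⟨m, hcm, fun m'' h'' => hc m'' h''⟩
    apply herr
    rw [dec, dif_pos hex]
    exact hc hex.choose hex.choose_spec.1
  obtain ⟨m', ⟨Sw₁, hSw₁, mask₁, key₁, hag⟩, hne⟩ := hm'
  refine ⟨Sw₁, hSw₁, m' - m, mask₁ - r.1, key₁ - r.2,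
    mac q k key₁ m' - mac q k r.2 m, sub_ne_zero.mpr hne, fun i hi => ?_, ?_⟩
  · rw [Pg_sub]
    show (PgF q k a m' mask₁ key₁ - PgF q k a m r.1 r.2).eval (pts q N i) = e i 0
    rw [Polynomial.eval_sub, hag i hi]
    simp only [hy, Pi.add_apply]
    show enc q k a N m r i 0 + e i 0 - enc q k a N m r i 0 = e i 0
    ring
  · have h1 : r.2 + (key₁ - r.2) = key₁ := by ring
    have h2 : m + (m' - m) = m' := by
      funext i
      simp only [Pi.add_apply, Pi.sub_apply]
      ring
    rw [h1, h2]
    ring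

/-! At most `k+2` bad keys for each fixed subset, error vector and message. -/

lemma card_BadP_le (q k a b N : ℕ) [Fact (Nat.Prime q)] (hq2 : k + 2 < q) (hNq : N < q)
    (hab : k + a + 2 ≤ N - b) (hbN : b ≤ N) (m : Fin k → ZMod q) (e : Fin N → ZMod q)
    (Sw' : Finset (Fin N)) :
    (Finset.univ.filter fun key : ZMod q => BadP q k a b N m e Sw' key).card ≤ k + 2 := by
  rcases Finset.eq_empty_or_nonempty
      (Finset.univ.filter fun key : ZMod q => BadP q k a b N m e Sw' key) with hemp | hne
  · rw [hemp]
    simp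
  obtain ⟨key₀, hkey₀⟩ := hne
  obtain ⟨hb', pm₀, pms₀, pk₀, pt₀, hpm₀, hev₀, hmac₀⟩ := (Finset.mem_filter.mp hkey₀).2
  have hTcard : k + a + 2 ≤ (Finset.univ.filter fun i : Fin N => i ∉ Sw').card := by
    have h1 : (Finset.univ.filter fun i : Fin N => i ∉ Sw') = Finset.univ \ Sw' := by
      ext i
      simp
    rw [h1, Finset.card_sdiff_of_subset (Finset.subset_univ _), Finset.card_univ, Fintype.card_fin]
    omega
  have huniq : ∀ key : ZMod q, BadP q k a b N m e Sw' key →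
      mac q k (key + pk₀) (m + pm₀) = mac q k key m + pt₀ := by
    intro key ⟨_, pm₁, pms₁, pk₁, pt₁, hpm₁, hev₁, hmac₁⟩
    have hdiff : Pg q k a (pm₁ - pm₀) (pms₁ - pms₀) (pk₁ - pk₀) (pt₁ - pt₀) = 0 := by
      apply eq_zero_of_vanish q k a N hNq _ hTcard
      · rw [Pg_sub]
        refine le_trans (Polynomial.natDegree_sub_le _ _) (max_le ?_ ?_) <;>
          exact natDegree_Pg_le _ _ _ _ _ _ _
      · intro i hi
        have hi' : i ∉ Sw' := (Finset.mem_filter.mp hi).2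
        rw [Pg_sub, Polynomial.eval_sub, hev₁ i hi', hev₀ i hi', sub_self]
    have hPg : Pg q k a pm₁ pms₁ pk₁ pt₁ = Pg q k a pm₀ pms₀ pk₀ pt₀ := by
      rw [Pg_sub] at hdiff
      exact sub_eq_zero.mp hdiff
    have hpm : pm₁ = pm₀ := by
      funext i
      have h := congrArg (fun p => Polynomial.coeff p (i : ℕ)) hPg
      simp only [coeff_Pg, Finset.mem_range] at h
      rw [if_pos (by have := i.isLt; omega), if_pos (by have := i.isLt; omega),
        co_msg, co_msg] at h
      exact h
    have hpk : pk₁ = pk₀ := by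
      have h := congrArg (fun p => Polynomial.coeff p (k + a)) hPg
      simp only [coeff_Pg, Finset.mem_range] at h
      rw [if_pos (by omega), if_pos (by omega), co_key, co_key] at h
      exact h
    have hpt : pt₁ = pt₀ := by
      have h := congrArg (fun p => Polynomial.coeff p (k + a + 1)) hPg
      simp only [coeff_Pg, Finset.mem_range] at h
      rw [if_pos (by omega), if_pos (by omega), co_tag, co_tag] at h
      exact h
    rw [← hpm, ← hpk, ← hpt]
    exact hmac₁
  have hsub : (Finset.univ.filter fun key : ZMod q => BadP q k a b N m e Sw' key)
      ⊆ (Qp q k m pm₀ pk₀ pt₀).roots.toFinset := by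
    intro key hkey
    have hbad := (Finset.mem_filter.mp hkey).2
    rw [Multiset.mem_toFinset, Polynomial.mem_roots (Qp_ne_zero q k hq2 m pm₀ pk₀ pt₀ hpm₀)]
    show (Qp q k m pm₀ pk₀ pt₀).eval key = 0
    rw [eval_Qp, huniq key hbad]
    ring
  have h1 := Finset.card_le_card hsub
  have h2 := Multiset.toFinset_card_le (Qp q k m pm₀ pk₀ pt₀).roots
  have h3 := Polynomial.card_roots' (Qp q k m pm₀ pk₀ pt₀)
  have h4 := natDegree_Qp_le q k m pm₀ pk₀ pt₀
  omega


/-! View map and fiber counting. -/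

def vw (q k a N : ℕ) (Sr : Finset (Fin N)) (m : Fin k → ZMod q)
    (r : (Fin a → ZMod q) × ZMod q) : {i // i ∈ Sr} → (Fin 1 → ZMod q) :=
  fun j => enc q k a N m r j.val

lemma eval_PgF_mask_add (q k a : ℕ) (m : Fin k → ZMod q) (mask d : Fin a → ZMod q)
    (key : ZMod q) (x : ZMod q) :
    (PgF q k a m (mask + d) key).eval x = (PgF q k a m mask key).eval x + phi q k a d x := by
  have h := Pg_add q k a m 0 mask d key 0 (mac q k key m) 0
  simp only [add_zero] at h
  rw [PgF, h, Polynomial.eval_add, eval_Pg_mask]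
  rfl

lemma maskFiber_card_eq (q k a N : ℕ) [Fact (Nat.Prime q)] (hNq : N < q)
    (Sr : Finset (Fin N)) (hSr : Sr.card ≤ a) (m : Fin k → ZMod q) (key : ZMod q)
    (v v' : {i // i ∈ Sr} → (Fin 1 → ZMod q)) :
    (Finset.univ.filter fun mask : Fin a → ZMod q =>
        vw q k a N Sr m (mask, key) = v).card
      = (Finset.univ.filter fun mask : Fin a → ZMod q =>
        vw q k a N Sr m (mask, key) = v').card := by
  obtain ⟨d, hd⟩ := exists_phi_eq q k a N hNq Sr hSr (fun i => v' i 0 - v i 0)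
  have hshift : ∀ (mask : Fin a → ZMod q), vw q k a N Sr m (mask, key) = v →
      vw q k a N Sr m (mask + d, key) = v' := by
    intro mask hv
    funext j x
    have hx : x = 0 := Subsingleton.elim x 0
    subst hx
    have h1 : vw q k a N Sr m (mask, key) j 0 = v j 0 := by rw [hv]
    show (PgF q k a m (mask + d) key).eval (pts q N j.val) = v' j 0
    rw [eval_PgF_mask_add, hd j]
    have h2 : (PgF q k a m mask key).eval (pts q N j.val) = v j 0 := h1
    rw [h2]
    ring
  have hshift' : ∀ (mask : Fin a → ZMod q), vw q k a N Sr m (mask, key) = v' →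
      vw q k a N Sr m (mask - d, key) = v := by
    intro mask hv
    funext j x
    have hx : x = 0 := Subsingleton.elim x 0
    subst hx
    have h1 : vw q k a N Sr m (mask, key) j 0 = v' j 0 := by rw [hv]
    show (PgF q k a m (mask - d) key).eval (pts q N j.val) = v j 0
    have h2 : (PgF q k a m ((mask - d) + d) key).eval (pts q N j.val)
        = (PgF q k a m (mask - d) key).eval (pts q N j.val) + phi q k a d (pts q N j.val) :=
      eval_PgF_mask_add q k a m (mask - d) d key _
    rw [sub_add_cancel] at h2
    have h3 : (PgF q k a m mask key).eval (pts q N j.val) = v' j 0 := h1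
    rw [hd j] at h2
    rw [h3] at h2
    linear_combination -h2
  apply Finset.card_bij' (i := fun mask _ => mask + d) (j := fun mask _ => mask - d)
  case hi =>
    intro mask hmask
    simp only [Finset.mem_filter, Finset.mem_univ, true_and] at hmask ⊢
    exact hshift mask hmask
  case hj =>
    intro mask hmask
    simp only [Finset.mem_filter, Finset.mem_univ, true_and] at hmask ⊢
    exact hshift' mask hmask
  case left_inv => intro mask _; simp
  case right_inv => intro mask _; simp

lemma maskFiber_card_mul (q k a N : ℕ) [Fact (Nat.Prime q)] (hNq : N < q)
    (Sr : Finset (Fin N)) (hSr : Sr.card ≤ a) (m : Fin k → ZMod q) (key : ZMod q)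
    (v : {i // i ∈ Sr} → (Fin 1 → ZMod q)) :
    (Finset.univ.filter fun mask : Fin a → ZMod q =>
        vw q k a N Sr m (mask, key) = v).card
      * Fintype.card ({i // i ∈ Sr} → (Fin 1 → ZMod q))
      = Fintype.card (Fin a → ZMod q) := by
  have hpart : (Finset.univ : Finset (Fin a → ZMod q)).card
      = ∑ v' : {i // i ∈ Sr} → (Fin 1 → ZMod q),
          (Finset.univ.filter fun mask : Fin a → ZMod q =>
            vw q k a N Sr m (mask, key) = v').card :=
    Finset.card_eq_sum_card_fiberwise (fun x _ => Finset.mem_univ _)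
  calc (Finset.univ.filter fun mask : Fin a → ZMod q =>
        vw q k a N Sr m (mask, key) = v).card
      * Fintype.card ({i // i ∈ Sr} → (Fin 1 → ZMod q))
      = ∑ _v' : {i // i ∈ Sr} → (Fin 1 → ZMod q),
          (Finset.univ.filter fun mask : Fin a → ZMod q =>
            vw q k a N Sr m (mask, key) = v).card := by
        rw [Finset.sum_const, Finset.card_univ, smul_eq_mul, mul_comm]
    _ = ∑ v' : {i // i ∈ Sr} → (Fin 1 → ZMod q),
          (Finset.univ.filter fun mask : Fin a → ZMod q =>
            vw q k a N Sr m (mask, key) = v').card :=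
        Finset.sum_congr rfl (fun v' _ => maskFiber_card_eq q k a N hNq Sr hSr m key v v')
    _ = (Finset.univ : Finset (Fin a → ZMod q)).card := hpart.symm
    _ = Fintype.card (Fin a → ZMod q) := Finset.card_univ


lemma card_bad_le (q k a b N : ℕ) [Fact (Nat.Prime q)] (hq2 : k + 2 < q) (hNq : N < q)
    (hab : k + a + 2 ≤ N - b) (hbN : b ≤ N) (Sr : Finset (Fin N)) (hSr : Sr.card ≤ a)
    (m : Fin k → ZMod q) (E : ({i // i ∈ Sr} → (Fin 1 → ZMod q)) → Fin N → ZMod q)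
    (Sw' : Finset (Fin N)) :
    (Finset.univ.filter fun r : (Fin a → ZMod q) × ZMod q =>
        BadP q k a b N m (E (vw q k a N Sr m r)) Sw' r.2).card
      ≤ (k + 2) * Fintype.card (Fin a → ZMod q) := by
  have hCV : 0 < Fintype.card ({i // i ∈ Sr} → (Fin 1 → ZMod q)) := Fintype.card_pos
  apply Nat.le_of_mul_le_mul_right _ hCV
  have hfib := Finset.card_eq_sum_card_fiberwise
    (f := fun r : (Fin a → ZMod q) × ZMod q => vw q k a N Sr m r)
    (s := Finset.univ.filter fun r : (Fin a → ZMod q) × ZMod q =>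
      BadP q k a b N m (E (vw q k a N Sr m r)) Sw' r.2)
    (t := Finset.univ) (fun x _ => Finset.mem_univ _)
  rw [hfib, Finset.sum_mul]
  have hbound : ∀ v ∈ (Finset.univ : Finset ({i // i ∈ Sr} → (Fin 1 → ZMod q))),
      ((Finset.univ.filter fun r : (Fin a → ZMod q) × ZMod q =>
          BadP q k a b N m (E (vw q k a N Sr m r)) Sw' r.2).filter
        (fun r => vw q k a N Sr m r = v)).card
        * Fintype.card ({i // i ∈ Sr} → (Fin 1 → ZMod q))
      ≤ (k + 2) * Fintype.card (Fin a → ZMod q) := by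
    intro v _
    set Bv := Finset.univ.filter (fun key : ZMod q => BadP q k a b N m (E v) Sw' key) with hBv
    have hA : ((Finset.univ.filter fun r : (Fin a → ZMod q) × ZMod q =>
          BadP q k a b N m (E (vw q k a N Sr m r)) Sw' r.2).filter
        (fun r => vw q k a N Sr m r = v)).card
        ≤ ∑ key ∈ Bv, (Finset.univ.filter fun mask : Fin a → ZMod q =>
            vw q k a N Sr m (mask, key) = v).card := by
      rw [← Finset.card_sigma]
      apply Finset.card_le_card_of_injOn
        (fun r : (Fin a → ZMod q) × ZMod q =>
          (⟨r.2, r.1⟩ : Σ _key : ZMod q, Fin a → ZMod q))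
      · intro r hr
        simp only [Finset.mem_coe, Finset.mem_filter, Finset.mem_univ, true_and] at hr
        obtain ⟨hbad, hveq⟩ := hr
        rw [hveq] at hbad
        refine Finset.mem_sigma.mpr ⟨?_, ?_⟩
        · exact Finset.mem_filter.mpr ⟨Finset.mem_univ _, hbad⟩
        · refine Finset.mem_filter.mpr ⟨Finset.mem_univ _, ?_⟩
          rw [show ((r.1, r.2) : (Fin a → ZMod q) × ZMod q) = r from rfl]
          exact hveq
      · intro r _ r' _ heq
        have h2 : r.2 = r'.2 := congrArg Sigma.fst heq
        have h1 : r.1 = r'.1 :=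
          congrArg (fun s : Σ _key : ZMod q, Fin a → ZMod q => s.2) heq
        exact Prod.ext h1 h2
    calc ((Finset.univ.filter fun r : (Fin a → ZMod q) × ZMod q =>
          BadP q k a b N m (E (vw q k a N Sr m r)) Sw' r.2).filter
        (fun r => vw q k a N Sr m r = v)).card
        * Fintype.card ({i // i ∈ Sr} → (Fin 1 → ZMod q))
        ≤ (∑ key ∈ Bv, (Finset.univ.filter fun mask : Fin a → ZMod q =>
            vw q k a N Sr m (mask, key) = v).card)
          * Fintype.card ({i // i ∈ Sr} → (Fin 1 → ZMod q)) :=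
        Nat.mul_le_mul_right _ hA
      _ = ∑ key ∈ Bv, (Finset.univ.filter fun mask : Fin a → ZMod q =>
            vw q k a N Sr m (mask, key) = v).card
          * Fintype.card ({i // i ∈ Sr} → (Fin 1 → ZMod q)) := Finset.sum_mul _ _ _
      _ = ∑ _key ∈ Bv, Fintype.card (Fin a → ZMod q) :=
        Finset.sum_congr rfl (fun key _ => maskFiber_card_mul q k a N hNq Sr hSr m key v)
      _ = Bv.card * Fintype.card (Fin a → ZMod q) := by
        rw [Finset.sum_const, smul_eq_mul]
      _ ≤ (k + 2) * Fintype.card (Fin a → ZMod q) :=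
        Nat.mul_le_mul_right _ (card_BadP_le q k a b N hq2 hNq hab hbN m (E v) Sw')
  calc ∑ v : {i // i ∈ Sr} → (Fin 1 → ZMod q),
        ((Finset.univ.filter fun r : (Fin a → ZMod q) × ZMod q =>
          BadP q k a b N m (E (vw q k a N Sr m r)) Sw' r.2).filter
          (fun r => vw q k a N Sr m r = v)).card
        * Fintype.card ({i // i ∈ Sr} → (Fin 1 → ZMod q))
      ≤ ∑ _v : {i // i ∈ Sr} → (Fin 1 → ZMod q), (k + 2) * Fintype.card (Fin a → ZMod q) :=
        Finset.sum_le_sum hbound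
    _ = (k + 2) * Fintype.card (Fin a → ZMod q)
          * Fintype.card ({i // i ∈ Sr} → (Fin 1 → ZMod q)) := by
        rw [Finset.sum_const, Finset.card_univ, smul_eq_mul, mul_comm]

lemma card_err_le (q k a b N : ℕ) [Fact (Nat.Prime q)] (hq2 : k + 2 < q) (hNq : N < q)
    (hab : k + a + 2 ≤ N - b) (hbN : b ≤ N) (Sr Sw : Finset (Fin N)) (hSr : Sr.card ≤ a)
    (hSw : Sw.card ≤ b) (m : Fin k → ZMod q)
    (G : ({i // i ∈ Sr} → (Fin 1 → ZMod q)) → Fin N → (Fin 1 → ZMod q))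
    (hG : ∀ x i, i ∉ Sw → G x i = 0) :
    (Finset.univ.filter fun r : (Fin a → ZMod q) × ZMod q =>
        ¬ (dec q k a b N (fun i => enc q k a N m r i + G (vw q k a N Sr m r) i) = m)).card
      ≤ 2 ^ N * ((k + 2) * Fintype.card (Fin a → ZMod q)) := by
  have hsub : (Finset.univ.filter fun r : (Fin a → ZMod q) × ZMod q =>
        ¬ (dec q k a b N (fun i => enc q k a N m r i + G (vw q k a N Sr m r) i) = m))
      ⊆ Finset.univ.biUnion (fun Sw' : Finset (Fin N) =>
        Finset.univ.filter fun r : (Fin a → ZMod q) × ZMod q =>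
          BadP q k a b N m ((fun v i => G v i 0) (vw q k a N Sr m r)) Sw' r.2) := by
    intro r hr
    obtain ⟨Sw', hSw'⟩ := err_implies_bad q k a b N m r (G (vw q k a N Sr m r)) Sw hSw
      (hG _) ((Finset.mem_filter.mp hr).2)
    exact Finset.mem_biUnion.mpr ⟨Sw', Finset.mem_univ _,
      Finset.mem_filter.mpr ⟨Finset.mem_univ _, hSw'⟩⟩
  refine le_trans (le_trans (Finset.card_le_card hsub) Finset.card_biUnion_le) ?_
  refine le_trans (Finset.sum_le_sum (fun Sw' _ =>
    card_bad_le q k a b N hq2 hNq hab hbN Sr hSr m (fun v i => G v i 0) Sw')) ?_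
  rw [Finset.sum_const, Finset.card_univ, Fintype.card_finset, Fintype.card_fin, smul_eq_mul]


/-! Reliability of the code. -/

theorem reliability (q k a b N : ℕ) [Fact (Nat.Prime q)] (hq2 : k + 2 < q) (hNq : N < q)
    (hab : k + a + 2 ≤ N - b) (hbN : b ≤ N) (ρr ρw ξ : ℝ)
    (ha : (a : ℝ) = ρr * N) (hb : (b : ℝ) = ρw * N)
    (hξq : (2:ℝ)^N * ((k:ℝ)+2) ≤ ξ * q) :
    (theCode q k a b N).Reliability ξ ρr ρw := by
  intro PM hPM hPM1 Sr Sw hSr hSw T _inst PT hPT hPT1 g hg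
  have hSra : Sr.card ≤ a := by
    rw [← ha] at hSr; exact_mod_cast hSr
  have hSwb : Sw.card ≤ b := by
    rw [← hb] at hSw; exact_mod_cast hSw
  have hq0 : (0:ℝ) < q := by exact_mod_cast (Fact.out : Nat.Prime q).pos
  have hPi : Fintype.card (Fin a → ZMod q) = q ^ a := by
    rw [Fintype.card_fun, ZMod.card, Fintype.card_fin]
  have hCR : ((Fintype.card (theCode q k a b N).Rt : ℕ) : ℝ) = (q:ℝ)^a * q := by
    have h1 : Fintype.card (theCode q k a b N).Rt
        = Fintype.card ((Fin a → ZMod q) × ZMod q) := Fintype.card_congr (Equiv.refl _)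
    rw [h1, Fintype.card_prod, hPi, ZMod.card]
    push_cast
    ring
  have hCRpos : (0:ℝ) < ((Fintype.card (theCode q k a b N).Rt : ℕ) : ℝ) := by
    rw [hCR]
    positivity
  have hmain : ∀ m : (theCode q k a b N).Mt, ∀ t : T,
      (∑ r : (theCode q k a b N).Rt,
        PM m * PT t / ((Fintype.card (theCode q k a b N).Rt : ℕ) : ℝ) *
        (if (theCode q k a b N).dec (fun i => (theCode q k a b N).enc m r i +
            g (fun j => (theCode q k a b N).enc m r j.val) t i) = m then (0:ℝ) else 1))
      ≤ PM m * PT t * ξ := by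
    intro m t
    have hite : ∀ r : (theCode q k a b N).Rt,
        (if (theCode q k a b N).dec (fun i => (theCode q k a b N).enc m r i +
            g (fun j => (theCode q k a b N).enc m r j.val) t i) = m then (0:ℝ) else 1)
        = (if ¬ ((theCode q k a b N).dec (fun i => (theCode q k a b N).enc m r i +
            g (fun j => (theCode q k a b N).enc m r j.val) t i) = m) then (1:ℝ) else 0) := by
      intro r
      by_cases h : (theCode q k a b N).dec (fun i => (theCode q k a b N).enc m r i +
          g (fun j => (theCode q k a b N).enc m r j.val) t i) = m <;> simp [h]
    rw [← Finset.mul_sum, Finset.sum_congr rfl (fun r _ => hite r), Finset.sum_boole]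
    have hfeq : (Finset.univ.filter fun r : (theCode q k a b N).Rt =>
        ¬ ((theCode q k a b N).dec (fun i => (theCode q k a b N).enc m r i +
            g (fun j => (theCode q k a b N).enc m r j.val) t i) = m))
        = (Finset.univ.filter fun r : (Fin a → ZMod q) × ZMod q =>
          ¬ (dec q k a b N (fun i => enc q k a N m r i +
            g (vw q k a N Sr m r) t i) = m)) := by
      ext r
      simp only [Finset.mem_filter, Finset.mem_univ, true_and]
      constructor
      · intro h
        exact Finset.mem_filter.mpr ⟨Finset.mem_univ _, h⟩
      · intro h
        exact (Finset.mem_filter.mp h).2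
    have hcardNat : (Finset.univ.filter fun r : (theCode q k a b N).Rt =>
        ¬ ((theCode q k a b N).dec (fun i => (theCode q k a b N).enc m r i +
            g (fun j => (theCode q k a b N).enc m r j.val) t i) = m)).card
        ≤ 2 ^ N * ((k + 2) * Fintype.card (Fin a → ZMod q)) := by
      rw [hfeq]
      convert card_err_le q k a b N hq2 hNq hab hbN Sr Sw hSra hSwb m (fun x i => g x t i)
        (fun x i hi => hg x t i hi)
      apply congrArg Finset.card
      congr 1
    have hcard : ((Finset.univ.filter fun r : (theCode q k a b N).Rt =>
        ¬ ((theCode q k a b N).dec (fun i => (theCode q k a b N).enc m r i +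
            g (fun j => (theCode q k a b N).enc m r j.val) t i) = m)).card : ℝ)
        ≤ (2:ℝ)^N * ((k:ℝ)+2) * (q:ℝ)^a := by
      rw [hPi] at hcardNat
      calc ((Finset.univ.filter _).card : ℝ) ≤ ((2 ^ N * ((k + 2) * q ^ a) : ℕ) : ℝ) := by
            exact_mod_cast hcardNat
        _ = (2:ℝ)^N * ((k:ℝ)+2) * (q:ℝ)^a := by push_cast; ring
    calc PM m * PT t / ((Fintype.card (theCode q k a b N).Rt : ℕ) : ℝ) *
          ((Finset.univ.filter fun r : (theCode q k a b N).Rt =>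
            ¬ ((theCode q k a b N).dec (fun i => (theCode q k a b N).enc m r i +
              g (fun j => (theCode q k a b N).enc m r j.val) t i) = m)).card : ℝ)
        = (PM m * PT t) * (((Finset.univ.filter fun r : (theCode q k a b N).Rt =>
            ¬ ((theCode q k a b N).dec (fun i => (theCode q k a b N).enc m r i +
              g (fun j => (theCode q k a b N).enc m r j.val) t i) = m)).card : ℝ)
            / ((Fintype.card (theCode q k a b N).Rt : ℕ) : ℝ)) := by ring
      _ ≤ (PM m * PT t) * ξ := by
          apply mul_le_mul_of_nonneg_left _ (mul_nonneg (hPM m) (hPT t))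
          rw [div_le_iff₀ hCRpos]
          calc ((Finset.univ.filter _).card : ℝ) ≤ (2:ℝ)^N * ((k:ℝ)+2) * (q:ℝ)^a := hcard
            _ ≤ (ξ * q) * (q:ℝ)^a := mul_le_mul_of_nonneg_right hξq (by positivity)
            _ = ξ * ((q:ℝ)^a * q) := by ring
            _ = ξ * ((Fintype.card (theCode q k a b N).Rt : ℕ) : ℝ) := by rw [hCR]
      _ = PM m * PT t * ξ := by ring
  calc (∑ m : (theCode q k a b N).Mt, ∑ r : (theCode q k a b N).Rt, ∑ t : T,
        PM m * PT t / ((Fintype.card (theCode q k a b N).Rt : ℕ) : ℝ) *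
        (if (theCode q k a b N).dec (fun i => (theCode q k a b N).enc m r i +
            g (fun j => (theCode q k a b N).enc m r j.val) t i) = m then (0:ℝ) else 1))
      = ∑ m : (theCode q k a b N).Mt, ∑ t : T, ∑ r : (theCode q k a b N).Rt,
        PM m * PT t / ((Fintype.card (theCode q k a b N).Rt : ℕ) : ℝ) *
        (if (theCode q k a b N).dec (fun i => (theCode q k a b N).enc m r i +
            g (fun j => (theCode q k a b N).enc m r j.val) t i) = m then (0:ℝ) else 1) :=
        Finset.sum_congr rfl (fun m _ => Finset.sum_comm)
    _ ≤ ∑ m : (theCode q k a b N).Mt, ∑ t : T, PM m * PT t * ξ := by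
        apply Finset.sum_le_sum
        intro m _
        apply Finset.sum_le_sum
        intro t _
        exact hmain m t
    _ = ∑ m : (theCode q k a b N).Mt, PM m * ξ := by
        apply Finset.sum_congr rfl
        intro m _
        rw [show ∀ x, (∑ t : T, PM m * PT t * ξ) = x → (∑ t : T, PM m * PT t * ξ) = x
          from fun x h => h]
        calc (∑ t : T, PM m * PT t * ξ) = (PM m * ξ) * ∑ t : T, PT t := by
              rw [Finset.mul_sum]
              exact Finset.sum_congr rfl (fun t _ => by ring)
          _ = PM m * ξ := by rw [hPT1, mul_one]
    _ = ξ := by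
        calc (∑ m : (theCode q k a b N).Mt, PM m * ξ)
            = (∑ m : (theCode q k a b N).Mt, PM m) * ξ := (Finset.sum_mul _ _ _).symm
          _ = ξ := by rw [hPM1, one_mul]

/-! Secrecy of the code. -/

theorem secrecy (q k a b N : ℕ) [Fact (Nat.Prime q)] (hNq : N < q) (ρr : ℝ)
    (ha : (a : ℝ) = ρr * N) : (theCode q k a b N).Secrecy 0 ρr := by
  intro S hS m₀' m₁'
  have hSa : S.card ≤ a := by rw [← ha] at hS; exact_mod_cast hS
  suffices h : ∀ m₀ m₁ : Fin k → ZMod q,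
      sd (viewDist ((theCode q k a b N).enc m₀) S) (viewDist ((theCode q k a b N).enc m₁) S)
        ≤ 0 by
    exact h m₀' m₁'
  intro m₀ m₁
  have hdex : ∀ key : ZMod q, ∃ d : Fin a → ZMod q, ∀ i : {i // i ∈ S},
      phi q k a d (pts q N i.val)
        = -(Pg q k a (m₀ - m₁) 0 0 (mac q k key m₀ - mac q k key m₁)).eval (pts q N i.val) :=
    fun key => exists_phi_eq q k a N hNq S hSa _
  choose d hd using hdex
  have hshift : ∀ (key : ZMod q) (mask : Fin a → ZMod q) (i : {i // i ∈ S}),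
      (PgF q k a m₀ (mask + d key) key).eval (pts q N i.val)
        = (PgF q k a m₁ mask key).eval (pts q N i.val) := by
    intro key mask i
    have h2 := Pg_add q k a (m₀ - m₁) 0 0 (d key) 0 0 (mac q k key m₀ - mac q k key m₁) 0
    simp only [add_zero, zero_add] at h2
    have h3 := Pg_sub q k a m₀ m₁ (mask + d key) mask key key (mac q k key m₀)
      (mac q k key m₁)
    rw [add_sub_cancel_left, sub_self] at h3
    have h5 := h3.symm.trans h2
    have h4 := congrArg (Polynomial.eval (pts q N i.val)) h5
    simp only [Polynomial.eval_sub, Polynomial.eval_add] at h4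
    rw [eval_Pg_mask, hd key i] at h4
    rw [PgF, PgF]
    linear_combination h4
  have hσr : ∀ r : (Fin a → ZMod q) × ZMod q, ((r.1 + d r.2 - d r.2, r.2) :
      (Fin a → ZMod q) × ZMod q) = r := by
    intro r
    rw [add_sub_cancel_right]
  have hσl : ∀ r : (Fin a → ZMod q) × ZMod q, ((r.1 - d r.2 + d r.2, r.2) :
      (Fin a → ZMod q) × ZMod q) = r := by
    intro r
    rw [sub_add_cancel]
  have hview : viewDist ((theCode q k a b N).enc m₀) S = viewDist ((theCode q k a b N).enc m₁) S := by
    refine viewDist_congr _ _ S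
      ⟨fun r => (r.1 + d r.2, r.2), fun r => (r.1 - d r.2, r.2), hσr, hσl⟩ ?_
    intro r i hi
    funext x
    have hx : x = 0 := Subsingleton.elim x 0
    subst hx
    exact hshift r.2 r.1 ⟨i, hi⟩
  rw [hview]
  simp [sd]

end Constr

/-- Explicit construction: for all `ρr, ρw ≥ 0` and `ξ ∈ (0, 1/2)` with
`ρr + ρw + ξ < 1`, for all large enough `N` making `ρr N` and `ρw N` integers,
there are a prime `q > N u` and a folding parameter `u ≤ 169/ξ²` such that over
the alphabet `Σ = F_q^u` there is a perfectly secret `(0,δ)`-AWTP code for the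
`(ρr,ρw)`-AWTP channel with `δ ≤ ξ` and `log|𝓜| ≥ (1-ρr-ρw-ξ) N log|Σ|`;
hence the rate `1 - ρr - ρw` is achievable with perfect secrecy. -/
theorem capacity_achieving_construction
    (ρr ρw ξ : ℝ) (hρr : 0 ≤ ρr) (hρw : 0 ≤ ρw)
    (hξ0 : 0 < ξ) (hξ : ξ < 1 / 2) (hsum : ρr + ρw + ξ < 1) :
    ∃ N₀ : ℕ, ∀ N : ℕ, N₀ ≤ N →
      (∃ a : ℕ, (a : ℝ) = ρr * N) → (∃ b : ℕ, (b : ℝ) = ρw * N) →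
      ∃ q u : ℕ, ∃ hq : q.Prime,
        (u : ℝ) ≤ 169 / ξ ^ 2 ∧ N * u < q ∧
        @GoodCode ρr ρw ξ N q u ⟨hq.pos.ne'⟩ := by
  refine ⟨max 1 (Nat.ceil ((2:ℝ)/ξ)), ?_⟩
  intro N hN haa hbb
  obtain ⟨a, ha⟩ := haa
  obtain ⟨b, hb⟩ := hbb
  have hN1 : 1 ≤ N := le_trans (le_max_left _ _) hN
  have hN0 : (0:ℝ) < N := by exact_mod_cast hN1
  have hNξ : (2:ℝ) ≤ ξ * N := by
    have h2 : ((2:ℝ)/ξ) ≤ (Nat.ceil ((2:ℝ)/ξ) : ℝ) := Nat.le_ceil _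
    have h3 : ((Nat.ceil ((2:ℝ)/ξ) : ℕ) : ℝ) ≤ (N:ℝ) := by
      exact_mod_cast le_trans (le_max_right _ _) hN
    have h4 : (2:ℝ)/ξ ≤ N := le_trans h2 h3
    calc (2:ℝ) = (2/ξ) * ξ := by field_simp
      _ ≤ (N:ℝ) * ξ := mul_le_mul_of_nonneg_right h4 hξ0.le
      _ = ξ * N := mul_comm _ _
  set t := Nat.floor (ξ * (N:ℝ)) with htdef
  have ht2 : 2 ≤ t := Nat.le_floor (by exact_mod_cast hNξ)
  have htle : (t:ℝ) ≤ ξ * N := Nat.floor_le (by positivity)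
  have habt : (a:ℝ) + b + t < N := by
    rw [ha, hb]
    have hmul : (ρr + ρw + ξ) * N < 1 * N := mul_lt_mul_of_pos_right hsum hN0
    have hexp : (ρr + ρw + ξ) * N = ρr * N + ρw * N + ξ * N := by ring
    linarith
  have habtN : a + b + t < N := by exact_mod_cast habt
  set k := N - (a + b + t) with hkdef
  have hkN : k + (a + b + t) = N := Nat.sub_add_cancel habtN.le
  have hkR : (k:ℝ) = (N:ℝ) - a - b - t := by
    have hcast := congrArg (fun x : ℕ => (x:ℝ)) hkN
    push_cast at hcast
    linarith
  have hkrate : (1 - ρr - ρw - ξ) * N ≤ (k:ℝ) := by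
    rw [hkR, ha, hb]
    have hexp2 : (1 - ρr - ρw - ξ) * N = N - ρr * N - ρw * N - ξ * N := by ring
    linarith
  have hk0 : (0:ℝ) < (k:ℝ) := by
    refine lt_of_lt_of_le ?_ hkrate
    have : 0 < 1 - ρr - ρw - ξ := by linarith
    positivity
  have hk1 : 1 ≤ k := Nat.cast_pos.mp hk0
  obtain ⟨q, hqM, hq⟩ := Nat.exists_infinite_primes
    (max (N + 3) (Nat.ceil ((2:ℝ)^N * ((N:ℝ)+2) / ξ) + 1))
  haveI : Fact (Nat.Prime q) := ⟨hq⟩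
  have hqN3 : N + 3 ≤ q := le_trans (le_max_left _ _) hqM
  have hqbig : (2:ℝ)^N * ((N:ℝ)+2) < ξ * q := by
    have h5 : (Nat.ceil ((2:ℝ)^N * ((N:ℝ)+2) / ξ) + 1 : ℕ) ≤ q :=
      le_trans (le_max_right _ _) hqM
    have h6 : (2:ℝ)^N * ((N:ℝ)+2) / ξ ≤ (Nat.ceil ((2:ℝ)^N * ((N:ℝ)+2) / ξ) : ℝ) :=
      Nat.le_ceil _
    have h7 : ((Nat.ceil ((2:ℝ)^N * ((N:ℝ)+2) / ξ) : ℕ) : ℝ) + 1 ≤ (q:ℝ) := by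
      exact_mod_cast h5
    have h8 : (2:ℝ)^N * ((N:ℝ)+2) / ξ < q := by linarith
    rw [div_lt_iff₀ hξ0] at h8
    linarith
  have hNq : N < q := by omega
  have hq2 : k + 2 < q := by omega
  have hab2 : k + a + 2 ≤ N - b := by omega
  have hbN : b ≤ N := by omega
  refine ⟨q, 1, hq, ?_, ?_, ?_⟩
  · push_cast
    rw [le_div_iff₀ (by positivity)]
    nlinarith
  · omega
  · refine ⟨Constr.theCode q k a b N, ?_, ?_, ?_, ?_⟩
    · have hcm : Fintype.card (Constr.theCode q k a b N).Mt = q ^ k := by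
        have h1 : Fintype.card (Constr.theCode q k a b N).Mt
            = Fintype.card (Fin k → ZMod q) := Fintype.card_congr (Equiv.refl _)
        rw [h1, Fintype.card_fun, ZMod.card, Fintype.card_fin]
      rw [hcm]
      calc 2 ≤ q := hq.two_le
        _ = q ^ 1 := (pow_one q).symm
        _ ≤ q ^ k := Nat.pow_le_pow_right hq.pos hk1
    · have hcm : Fintype.card (Constr.theCode q k a b N).Mt = q ^ k := by
        have h1 : Fintype.card (Constr.theCode q k a b N).Mt
            = Fintype.card (Fin k → ZMod q) := Fintype.card_congr (Equiv.refl _)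
        rw [h1, Fintype.card_fun, ZMod.card, Fintype.card_fin]
      have hca : Fintype.card (Fin 1 → ZMod q) = q := by
        rw [Fintype.card_fun, ZMod.card, Fintype.card_fin, pow_one]
      rw [hcm, hca]
      have hlq : (0:ℝ) ≤ Real.logb 2 q :=
        Real.logb_nonneg (by norm_num) (by exact_mod_cast hq.one_lt.le)
      have hql : ((q ^ k : ℕ) : ℝ) = ((q:ℝ)) ^ k := by push_cast; ring
      rw [hql, Real.logb_pow]
      exact mul_le_mul_of_nonneg_right hkrate hlq
    · exact Constr.secrecy q k a b N hNq ρr ha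
    · apply Constr.reliability q k a b N hq2 hNq hab2 hbN ρr ρw ξ ha hb
      have h2N : (0:ℝ) < 2^N := by positivity
      have hkN' : (k:ℝ) ≤ N := by exact_mod_cast (show k ≤ N by omega)
      have hstep : (2:ℝ)^N * ((k:ℝ)+2) ≤ (2:ℝ)^N * ((N:ℝ)+2) := by
        apply mul_le_mul_of_nonneg_left _ h2N.le
        linarith
      linarith



end AWTP
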